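/- A positive integer n ≥ 2 is prime if and only if T(n) = 1 + T(n-1). -/

import Mathlib

/-- `f (a₁,…,a_k)` defined by `f(a₁) = a₁`, `f(a₁,…,a_{i+1}) = (f(a₁,…,a_i) + 1) · a_{i+1}`. -/
def f (l : List ℕ) : ℕ := l.foldl (fun acc a => (acc + 1) * a) 0

/-- `T n` is the number of nonempty finite sequences of positive integers with `f A = n`,
with the additional convention `T 0 = 1`. -/
noncomputable def T : ℕ → ℕ
  | 0 => 1
  | n + 1 => Nat.card {l : List ℕ // l ≠ [] ∧ (∀ a ∈ l, 0 < a) ∧ f l = n + 1}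

/-- The set of admissible lists with value `n`. -/
def Sset (n : ℕ) : Set (List ℕ) := {l | l ≠ [] ∧ (∀ a ∈ l, 0 < a) ∧ f l = n}

lemma f_concat (l : List ℕ) (a : ℕ) : f (l ++ [a]) = (f l + 1) * a := by
  simp [f, List.foldl_append]

lemma foldl_ge (l : List ℕ) (hl : ∀ a ∈ l, 0 < a) (s : ℕ) :
    s + l.length ≤ l.foldl (fun acc a => (acc + 1) * a) s := by
  induction l generalizing s with
  | nil => simp
  | cons b t ih =>
    have hb : 0 < b := hl b List.mem_cons_self
    have h1 : s + 1 ≤ (s + 1) * b := Nat.le_mul_of_pos_right _ hb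
    have := ih (fun a ha => hl a (List.mem_cons_of_mem _ ha)) ((s + 1) * b)
    simpa using le_trans (by omega) this

lemma f_pos (l : List ℕ) (hne : l ≠ []) (hl : ∀ a ∈ l, 0 < a) : 0 < f l := by
  have h1 := foldl_ge l hl 0
  have h2 : 1 ≤ l.length := List.length_pos_iff.mpr hne
  simp only [f]
  omega

lemma length_le_f (l : List ℕ) (hl : ∀ a ∈ l, 0 < a) : l.length ≤ f l := by
  have := foldl_ge l hl 0
  simpa [f] using this

lemma mem_le_foldl (l : List ℕ) (hl : ∀ a ∈ l, 0 < a) (s : ℕ) :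
    ∀ a ∈ l, a ≤ l.foldl (fun acc a => (acc + 1) * a) s := by
  induction l generalizing s with
  | nil => simp
  | cons b t ih =>
    intro a ha
    have hge := foldl_ge t (fun x hx => hl x (List.mem_cons_of_mem _ hx)) ((s + 1) * b)
    rcases List.mem_cons.mp ha with h | h
    · subst h
      have hb : a ≤ (s + 1) * a := Nat.le_mul_of_pos_left _ (by omega)
      simp only [List.foldl_cons]
      omega
    · exact ih (fun x hx => hl x (List.mem_cons_of_mem _ hx)) ((s + 1) * b) a h

lemma mem_le_f (l : List ℕ) (hl : ∀ a ∈ l, 0 < a) : ∀ a ∈ l, a ≤ f l :=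
  mem_le_foldl l hl 0

lemma Sset_finite (n : ℕ) : (Sset n).Finite := by
  have hfin : {l : List (Fin (n + 1)) | l.length ≤ n}.Finite := List.finite_length_le _ n
  have hima := hfin.image (List.map (fun a : Fin (n + 1) => (a : ℕ)))
  refine hima.subset ?_
  rintro l ⟨hne, hpos, hf⟩
  refine ⟨l.map (fun a => (⟨a % (n + 1), Nat.mod_lt _ (Nat.succ_pos n)⟩ : Fin (n + 1))), ?_, ?_⟩
  · simp only [Set.mem_setOf_eq, List.length_map]
    exact hf ▸ length_le_f l hpos
  · rw [List.map_map]
    have hcong : ∀ a ∈ l,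
        ((fun a : Fin (n + 1) => (a : ℕ)) ∘
          fun a : ℕ => (⟨a % (n + 1), Nat.mod_lt _ (Nat.succ_pos n)⟩ : Fin (n + 1))) a = id a := by
      intro a ha
      have := mem_le_f l hpos a ha
      simp only [Function.comp, id]
      exact Nat.mod_eq_of_lt (by omega)
    rw [List.map_congr_left hcong, List.map_id]

lemma T_eq_ncard (n : ℕ) (hn : 1 ≤ n) : T n = (Sset n).ncard := by
  obtain ⟨m, rfl⟩ := Nat.exists_eq_add_of_le hn
  rw [Nat.add_comm, ← Nat.card_coe_set_eq]
  rfl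

/-- decomposition of `Sset p` for `p` prime. -/
lemma Sset_prime (p : ℕ) (hp : p.Prime) :
    Sset p = insert [p] ((fun l => l ++ [1]) '' Sset (p - 1)) := by
  ext l
  constructor
  · rintro ⟨hne, hpos, hf⟩
    obtain ⟨l', a, hdec⟩ : ∃ l' a, l = l' ++ [a] :=
      ⟨l.dropLast, l.getLast hne, (List.dropLast_append_getLast hne).symm⟩
    have hfl : (f l' + 1) * a = p := by rw [hdec, f_concat] at hf; exact hf
    have hak : a ∣ p := ⟨f l' + 1, by rw [← hfl]; ring⟩
    have hpos' : ∀ b ∈ l', 0 < b := fun b hb =>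
      hpos b (by rw [hdec]; exact List.mem_append_left _ hb)
    rcases (Nat.Prime.eq_one_or_self_of_dvd hp a hak) with h1 | h2
    · right
      refine ⟨l', ⟨?_, hpos', ?_⟩, by rw [← h1]; exact hdec.symm⟩
      · rintro rfl
        subst h1
        simp [f] at hfl
        have := hp.two_le
        omega
      · subst h1
        have := hp.two_le
        omega
    · subst h2
      have hf0 : f l' = 0 := by
        have hpp := hp.pos
        nlinarith [hfl]
      have hl'nil : l' = [] := by
        by_contra hne'
        exact (f_pos l' hne' hpos').ne' hf0
      left
      rw [hdec, hl'nil]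
      simp
  · rintro (rfl | ⟨l', ⟨hne', hpos', hf'⟩, rfl⟩)
    · exact ⟨by simp, by simp [hp.pos], by simp [f]⟩
    · refine ⟨by simp, ?_, ?_⟩
      · intro b hb
        rcases List.mem_append.mp hb with h | h
        · exact hpos' b h
        · simp at h; omega
      · rw [f_concat, hf']
        have := hp.two_le
        omega

lemma concat_one_injOn (s : Set (List ℕ)) : Set.InjOn (fun l => l ++ [1]) s := by
  intro a _ b _ h
  simpa using h

theorem prime_iff_T (n : ℕ) (hn : 2 ≤ n) :
    n.Prime ↔ T n = 1 + T (n - 1) := by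
  have hT1 : T n = (Sset n).ncard := T_eq_ncard n (by omega)
  have hT2 : T (n - 1) = (Sset (n - 1)).ncard := T_eq_ncard (n - 1) (by omega)
  have hfin' : ((fun l => l ++ [1]) '' Sset (n - 1)).Finite := (Sset_finite (n - 1)).image _
  constructor
  · intro hp
    have h1 : [n] ∉ (fun l => l ++ [1]) '' Sset (n - 1) := by
      rintro ⟨l', _, h⟩
      have hlen := congrArg List.length h
      simp only [List.length_append, List.length_cons, List.length_nil] at hlen
      have hl' : l' = [] := List.length_eq_zero_iff.mp (by omega)
      subst hl'
      simp at h
      omega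
    rw [hT1, hT2, Sset_prime n hp, Set.ncard_insert_of_notMem h1 hfin',
      Set.ncard_image_of_injOn (concat_one_injOn _)]
    omega
  · intro hT
    by_contra hnp
    have hp' := Nat.minFac_prime (show n ≠ 1 by omega)
    have hd2 : 2 ≤ n.minFac := hp'.two_le
    have hlt : n.minFac < n := by
      rcases (Nat.minFac_le (show 0 < n by omega)).lt_or_eq with h | h
      · exact h
      · exact absurd (h ▸ hp') hnp
    have hmul : n / n.minFac * n.minFac = n := Nat.div_mul_cancel (Nat.minFac_dvd n)
    obtain ⟨d, q, hd2, hq2, hmul⟩ : ∃ d q, 2 ≤ d ∧ 2 ≤ q ∧ q * d = n := by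
      refine ⟨n.minFac, n / n.minFac, hd2, ?_, hmul⟩
      obtain ⟨q, hq⟩ : ∃ q, n / n.minFac = q := ⟨_, rfl⟩
      rw [hq] at hmul ⊢
      rcases Nat.lt_or_ge q 2 with h | h
      · interval_cases q <;> simp at hmul <;> omega
      · exact h
    have hsub : insert [n] (insert [q - 1, d] ((fun l => l ++ [1]) '' Sset (n - 1)))
        ⊆ Sset n := by
      rintro l (rfl | rfl | ⟨l', ⟨hne', hpos', hf'⟩, rfl⟩)
      · exact ⟨by simp, by simp; omega, by simp [f]⟩
      · refine ⟨by simp, ?_, ?_⟩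
        · intro b hb; simp at hb; rcases hb with rfl | rfl <;> omega
        · show f ([q - 1] ++ [d]) = n
          rw [f_concat]
          have h1 : f [q - 1] = q - 1 := by simp [f]
          rw [h1]
          have h2 : q - 1 + 1 = q := by omega
          rw [h2, hmul]
      · refine ⟨by simp, ?_, ?_⟩
        · intro b hb
          rcases List.mem_append.mp hb with h | h
          · exact hpos' b h
          · simp at h; omega
        · rw [f_concat, hf']; omega
    have hcard := Set.ncard_le_ncard hsub (Sset_finite n)
    have h1 : [n] ∉ insert [q - 1, d] ((fun l => l ++ [1]) '' Sset (n - 1)) := by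
      rintro (h | ⟨l', _, h⟩)
      · have := congrArg List.length h; simp at this
      · have hlen := congrArg List.length h
        simp only [List.length_append, List.length_cons, List.length_nil] at hlen
        have hl' : l' = [] := List.length_eq_zero_iff.mp (by omega)
        subst hl'; simp at h; omega
    have h2 : [q - 1, d] ∉ (fun l => l ++ [1]) '' Sset (n - 1) := by
      rintro ⟨l', _, h⟩
      have hlen := congrArg List.length h
      simp only [List.length_append, List.length_cons, List.length_nil] at hlen
      obtain ⟨x, hx⟩ := List.length_eq_one_iff.mp (show l'.length = 1 by omega)
      subst hx
      simp at h
      omega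
    rw [Set.ncard_insert_of_notMem h1 (hfin'.insert _),
        Set.ncard_insert_of_notMem h2 hfin',
        Set.ncard_image_of_injOn (concat_one_injOn _)] at hcard
    omega
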